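/- (Excited diagrams of type D as flagged increasing tableaux.) Let λ and μ be strict partitions with μ ⊆ λ. The map T ↦ D_T := {(i + T(i,j), j + T(i,j)) : (i,j) ∈ [μ]^D} is a bijection from the set of functions T : [μ]^D → ℤ_{≥0} satisfying T(i,j) ≤ T(i,j+1) and T(i,j) ≤ T(i+1,j) whenever both cells involved lie in [μ]^D, T(i,i+1) even for every diagonal cell (i,i+1) ∈ [μ]^D, and j ≤ λ_{i + T(i,j)} + i for every (i,j) ∈ [μ]^D, onto the set E^D(λ/μ) of excited diagrams of type D of shape λ/μ. -/

import Mathlib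

attribute [local instance] Classical.propDecidable

/-- `l : ℕ → ℕ` encodes a strict partition: the parts are `l 1 > l 2 > ⋯ > l ℓ > 0`
(indexed from `1`), with `l i = 0` for `i > ℓ` (and `l 0 = 0` by convention). -/
def IsStrictPartition (l : ℕ → ℕ) : Prop :=
  l 0 = 0 ∧ ∀ i, 1 ≤ i → (l i = 0 → l (i + 1) = 0) ∧ (l i ≠ 0 → l (i + 1) < l i)

/-- The shifted diagram of type B: cells `(i,j)` with `1 ≤ i ≤ ℓ(λ)` and
`i ≤ j ≤ λ_i + i - 1`.  (For a strict partition all such cells satisfy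
`i ≤ l 1` and `j ≤ 2 * l 1 + 2`, so the ambient box loses nothing.) -/
noncomputable def cellsB (l : ℕ → ℕ) : Finset (ℕ × ℕ) :=
  (Finset.Icc 1 (l 1) ×ˢ Finset.Icc 1 (2 * l 1 + 2)).filter
    (fun p => p.1 ≤ p.2 ∧ p.2 < l p.1 + p.1)

/-- The shifted diagram of type D: cells `(i,j)` with `1 ≤ i ≤ ℓ(λ)` and
`i + 1 ≤ j ≤ λ_i + i`. -/
noncomputable def cellsD (l : ℕ → ℕ) : Finset (ℕ × ℕ) :=
  (Finset.Icc 1 (l 1) ×ˢ Finset.Icc 1 (2 * l 1 + 2)).filter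
    (fun p => p.1 < p.2 ∧ p.2 ≤ l p.1 + p.1)

/-- `λ'_k`: the number of cells of `[λ]^B` in column `k`. -/
noncomputable def colB (l : ℕ → ℕ) (k : ℕ) : ℕ :=
  ((cellsB l).filter (fun p => p.2 = k)).card

/-- The size `|λ|` of a strict partition. -/
noncomputable def spSize (l : ℕ → ℕ) : ℕ := ∑ i ∈ Finset.Icc 1 (l 1), l i

/-- The length `ℓ(λ)` (number of nonzero parts) of a strict partition. -/
noncomputable def spLength (l : ℕ → ℕ) : ℕ :=
  ((Finset.Icc 1 (l 1)).filter (fun i => l i ≠ 0)).card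

/-- `μ ⋖ ν` for strict partitions (containment via type B diagrams and `|ν| = |μ| + 1`). -/
def CoversB (m n : ℕ → ℕ) : Prop :=
  cellsB m ⊆ cellsB n ∧ spSize n = spSize m + 1

/-- `μ ⋖ ν` for strict partitions (containment via type D diagrams and `|ν| = |μ| + 1`). -/
def CoversD (m n : ℕ → ℕ) : Prop :=
  cellsD m ⊆ cellsD n ∧ spSize n = spSize m + 1

/-- An excited move of type B with respect to `λ`. -/
def ExcitedMoveB (l : ℕ → ℕ) (D D' : Finset (ℕ × ℕ)) : Prop :=
  ∃ i j : ℕ, (i, j) ∈ D ∧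
    (i + 1, j) ∈ cellsB l ∧ (i + 1, j) ∉ D ∧
    (i, j + 1) ∈ cellsB l ∧ (i, j + 1) ∉ D ∧
    (i + 1, j + 1) ∈ cellsB l ∧ (i + 1, j + 1) ∉ D ∧
    D' = insert (i + 1, j + 1) (D.erase (i, j))

/-- The excited diagrams of type B of shape `λ/μ`: subsets of `[λ]^B` obtainable from
`[μ]^B` by finite sequences of excited moves of type B. -/
noncomputable def EB (l m : ℕ → ℕ) : Finset (Finset (ℕ × ℕ)) :=
  (cellsB l).powerset.filter
    (fun D => Relation.ReflTransGen (ExcitedMoveB l) (cellsB m) D)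

/-- An excited move of type D with respect to `λ`. -/
def ExcitedMoveD (l : ℕ → ℕ) (D D' : Finset (ℕ × ℕ)) : Prop :=
  (∃ i j : ℕ, i + 1 < j ∧ (i, j) ∈ D ∧
    (i + 1, j) ∈ cellsD l ∧ (i + 1, j) ∉ D ∧
    (i, j + 1) ∈ cellsD l ∧ (i, j + 1) ∉ D ∧
    (i + 1, j + 1) ∈ cellsD l ∧ (i + 1, j + 1) ∉ D ∧
    D' = insert (i + 1, j + 1) (D.erase (i, j))) ∨
  (∃ i : ℕ, (i, i + 1) ∈ D ∧
    (i, i + 2) ∈ cellsD l ∧ (i, i + 2) ∉ D ∧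
    (i, i + 3) ∈ cellsD l ∧ (i, i + 3) ∉ D ∧
    (i + 1, i + 2) ∈ cellsD l ∧ (i + 1, i + 2) ∉ D ∧
    (i + 1, i + 3) ∈ cellsD l ∧ (i + 1, i + 3) ∉ D ∧
    (i + 2, i + 3) ∈ cellsD l ∧ (i + 2, i + 3) ∉ D ∧
    D' = insert (i + 2, i + 3) (D.erase (i, i + 1)))

/-- The excited diagrams of type D of shape `λ/μ`. -/
noncomputable def ED (l m : ℕ → ℕ) : Finset (Finset (ℕ × ℕ)) :=
  (cellsD l).powerset.filter
    (fun D => Relation.ReflTransGen (ExcitedMoveD l) (cellsD m) D)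

/-- The set `W^B(μ, λ)`: all `1 ≤ k ≤ ℓ(λ)` with `λ_k ≠ μ_i` for all `i ≥ 1`, together
with all `k ≥ ℓ(λ) + 1` with `λ'_k - k ≠ μ'_i - i` for all `i ≥ 1`.  (All its elements
are at most `λ_1 + μ_1 + 2`, so the ambient interval loses nothing.) -/
noncomputable def WB (m l : ℕ → ℕ) : Finset ℕ :=
  (Finset.Icc 1 (l 1 + m 1 + 2)).filter (fun k =>
    (k ≤ spLength l ∧ ∀ i, 1 ≤ i → l k ≠ m i) ∨
    (spLength l + 1 ≤ k ∧ ∀ i, 1 ≤ i → (colB l k : ℤ) - k ≠ (colB m i : ℤ) - i))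

/-- The set `W^D(μ, λ)`. -/
noncomputable def WD (m l : ℕ → ℕ) : Finset ℕ :=
  (Finset.Icc 1 (l 1 + m 1 + 3)).filter (fun k =>
    (k ≤ spLength l ∧ ∀ i, 1 ≤ i → l k ≠ m i) ∨
    (k = spLength l + 1 ∧ Odd ((spLength l : ℤ) - (spLength m : ℤ))) ∨
    (spLength l + 2 ≤ k ∧ ∀ i, 1 ≤ i → (colB l k : ℤ) - k ≠ (colB m i : ℤ) - i))

/-- The type B hook length of a cell of `[λ]^B`. -/
noncomputable def hB (l : ℕ → ℕ) (p : ℕ × ℕ) : ℤ :=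
  if p.1 = p.2 then (l p.1 : ℤ)
  else if p.2 ≤ spLength l then (l p.1 : ℤ) + (l p.2 : ℤ)
  else ((l p.1 : ℤ) + (p.1 : ℤ) - (p.2 : ℤ)) + ((colB l p.2 : ℤ) - (p.1 : ℤ))

/-- The type D hook length of a cell of `[λ]^D`. -/
noncomputable def hD (l : ℕ → ℕ) (p : ℕ × ℕ) : ℤ :=
  if p.2 ≤ spLength l then (l p.1 : ℤ) + (l p.2 : ℤ)
  else ((l p.1 : ℤ) + (p.1 : ℤ) - (p.2 : ℤ) + 1) + ((colB l (p.2 - 1) : ℤ) - (p.1 : ℤ))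

/-- A standard Young tableau on a finite set of cells, encoded as `T : ℕ × ℕ → ℕ`
which is `0` off the cells and restricts to a bijection onto `{1, …, n}`,
increasing along rows and columns. -/
def IsSYT (cells : Finset (ℕ × ℕ)) (T : ℕ × ℕ → ℕ) : Prop :=
  Set.BijOn T ↑cells ↑(Finset.Icc 1 cells.card) ∧
  (∀ p, p ∉ cells → T p = 0) ∧
  (∀ i j : ℕ, (i, j) ∈ cells → (i, j + 1) ∈ cells → T (i, j) < T (i, j + 1)) ∧
  (∀ i j : ℕ, (i, j) ∈ cells → (i + 1, j) ∈ cells → T (i, j) < T (i + 1, j))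

/-- The skew diagram `[λ]^B ∖ [μ]^B`. -/
noncomputable def skewB (l m : ℕ → ℕ) : Finset (ℕ × ℕ) := cellsB l \ cellsB m

/-- The skew diagram `[λ]^D ∖ [μ]^D`. -/
noncomputable def skewD (l m : ℕ → ℕ) : Finset (ℕ × ℕ) := cellsD l \ cellsD m

/-- `f^{λ/μ}`: the number of standard Young tableaux of shifted skew shape `λ/μ`
(type B diagrams). -/
noncomputable def fB (l m : ℕ → ℕ) : ℕ :=
  Nat.card {T : ℕ × ℕ → ℕ // IsSYT (skewB l m) T}

/-- `f^{λ/μ}` via the type D diagrams. -/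
noncomputable def fD (l m : ℕ → ℕ) : ℕ :=
  Nat.card {T : ℕ × ℕ → ℕ // IsSYT (skewD l m) T}

/-- `x_k^B = λ_k` for `k ≤ ℓ(λ)` and `x_k^B = λ'_k - k` for `k > ℓ(λ)`. -/
noncomputable def xB (l : ℕ → ℕ) (k : ℕ) : ℤ :=
  if k ≤ spLength l then (l k : ℤ) else (colB l k : ℤ) - (k : ℤ)

/-- `x_k^D = λ_k` for `k ≤ ℓ(λ)` and `x_k^D = λ'_{k-1} - k + 1` for `k > ℓ(λ)`. -/
noncomputable def xD (l : ℕ → ℕ) (k : ℕ) : ℤ :=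
  if k ≤ spLength l then (l k : ℤ) else (colB l (k - 1) : ℤ) - (k : ℤ) + 1

/-- The weighted type B hook length `h^B(u; z)`: the sum of `z_{c(v)}` over the cells `v`
of the type B hook of `u` (the diagonal cell `(j,j)` counted twice when `i < j ≤ ℓ(λ)`). -/
noncomputable def hBz (l : ℕ → ℕ) (z : ℕ → ℝ) (u : ℕ × ℕ) : ℝ :=
  (∑ p ∈ (cellsB l).filter (fun p => p.1 = u.1 ∧ u.2 ≤ p.2), z (p.2 - p.1)) +
  (∑ p ∈ (cellsB l).filter (fun p => p.2 = u.2 ∧ u.1 < p.1), z (p.2 - p.1)) +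
  (if u.1 < u.2 ∧ u.2 ≤ spLength l then
      ∑ p ∈ (cellsB l).filter (fun p => p.1 = u.2), z (p.2 - p.1)
    else 0)

/-- The weighted type D hook length `h^D(u; z)`. -/
noncomputable def hDz (l : ℕ → ℕ) (z : ℕ → ℝ) (u : ℕ × ℕ) : ℝ :=
  (∑ p ∈ (cellsD l).filter (fun p => p.1 = u.1 ∧ u.2 ≤ p.2), z (p.2 - p.1)) +
  (∑ p ∈ (cellsD l).filter (fun p => p.2 = u.2 ∧ u.1 < p.1), z (p.2 - p.1)) +
  (∑ p ∈ (cellsD l).filter (fun p => p.1 = u.2), z (p.2 - p.1))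

/-- The weight `T_z` of a standard Young tableau `T` on `cells` (with `n = |cells|`):
`∏_{k=1}^n (z_{c(T⁻¹(n))} + ⋯ + z_{c(T⁻¹(k))})⁻¹`. -/
noncomputable def Tz (cells : Finset (ℕ × ℕ)) (z : ℕ → ℝ) (T : ℕ × ℕ → ℕ) : ℝ :=
  ∏ k ∈ Finset.Icc 1 cells.card,
    (∑ p ∈ cells.filter (fun p => k ≤ T p), z (p.2 - p.1))⁻¹

/-- `x_k^B(z) = z_0 + ⋯ + z_{λ_k - 1}` for `k ≤ ℓ(λ)`, and
`x_k^B(z) = -(z_0 + ⋯ + z_{k - λ'_k - 1})` for `k > ℓ(λ)`. -/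
noncomputable def xBz (l : ℕ → ℕ) (z : ℕ → ℝ) (k : ℕ) : ℝ :=
  if k ≤ spLength l then ∑ t ∈ Finset.range (l k), z t
  else -∑ t ∈ Finset.range (k - colB l k), z t


section Aux

variable {l m : ℕ → ℕ}

lemma sp_zero (hl : IsStrictPartition l) :
    ∀ a d, 1 ≤ a → l (a + d) ≠ 0 → l (a + d) + d ≤ l a := by
  intro a d ha
  induction d with
  | zero => simp
  | succ d ih =>
    intro hne
    have h1 : l (a + d) ≠ 0 := by
      intro h
      exact hne ((hl.2 (a + d) (by omega)).1 h)
    have h2 := (hl.2 (a + d) (by omega)).2 h1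
    have := ih h1
    show l (a + d + 1) + (d + 1) ≤ l a
    omega

lemma sp_mono (hl : IsStrictPartition l) {a b : ℕ} (h1 : 1 ≤ a) (h2 : a ≤ b)
    (h3 : l b ≠ 0) : l b + b ≤ l a + a := by
  have := sp_zero hl a (b - a) h1
  rw [show a + (b - a) = b from by omega] at this
  have := this h3
  omega

lemma mem_cellsD (hl : IsStrictPartition l) {i j : ℕ} :
    (i, j) ∈ cellsD l ↔ 1 ≤ i ∧ i < j ∧ j ≤ l i + i := by
  unfold cellsD
  simp only [Finset.mem_filter, Finset.mem_product, Finset.mem_Icc]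
  constructor
  · rintro ⟨⟨⟨_, _⟩, _, _⟩, h1, h2⟩
    exact ⟨by omega, h1, h2⟩
  · rintro ⟨h1, h2, h3⟩
    have hne : l i ≠ 0 := by omega
    have := sp_mono hl (a := 1) (b := i) le_rfl h1 hne
    refine ⟨⟨⟨h1, by omega⟩, by omega, by omega⟩, h2, h3⟩

lemma cells_nw (hl : IsStrictPartition l) {i j i' j' : ℕ} (h : (i, j) ∈ cellsD l)
    (h1 : 1 ≤ i') (h2 : i' ≤ i) (h3 : i' < j') (h4 : j' ≤ j) : (i', j') ∈ cellsD l := by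
  rw [mem_cellsD hl] at h ⊢
  obtain ⟨ha, hb, hc⟩ := h
  have hne : l i ≠ 0 := by omega
  have := sp_mono hl h1 h2 hne
  exact ⟨h1, h3, by omega⟩

end Aux
section Aux2

variable {l m : ℕ → ℕ}

/-- The tableau conditions of the theorem statement. -/
def Good (l m : ℕ → ℕ) (T : ℕ × ℕ → ℕ) : Prop :=
  (∀ p, p ∉ cellsD m → T p = 0) ∧
  (∀ i j : ℕ, (i, j) ∈ cellsD m → (i, j + 1) ∈ cellsD m → T (i, j) ≤ T (i, j + 1)) ∧
  (∀ i j : ℕ, (i, j) ∈ cellsD m → (i + 1, j) ∈ cellsD m → T (i, j) ≤ T (i + 1, j)) ∧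
  (∀ i : ℕ, (i, i + 1) ∈ cellsD m → Even (T (i, i + 1))) ∧
  (∀ i j : ℕ, (i, j) ∈ cellsD m → j ≤ l (i + T (i, j)) + i)

/-- The image map. -/
noncomputable def Phi (m : ℕ → ℕ) (T : ℕ × ℕ → ℕ) : Finset (ℕ × ℕ) :=
  (cellsD m).image (fun p => (p.1 + T p, p.2 + T p))

variable {T : ℕ × ℕ → ℕ}

lemma T_nw (hm : IsStrictPartition m) (hT : Good l m T) {a b i j : ℕ}
    (h1 : (a, b) ∈ cellsD m) (h2 : (i, j) ∈ cellsD m) (ha : a ≤ i) (hb : b ≤ j) :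
    T (a, b) ≤ T (i, j) := by
  have hm1 := (mem_cellsD hm).1 h1
  have hm2 := (mem_cellsD hm).1 h2
  -- step 1 : row chain from (a,b) to (a,j)
  have haj : (a, j) ∈ cellsD m := cells_nw hm h2 hm1.1 ha (by omega) le_rfl
  have hrow : ∀ d, (a, b + d) ∈ cellsD m → T (a, b) ≤ T (a, b + d) := by
    intro d
    induction d with
    | zero => intro _; exact le_rfl
    | succ d ih =>
      intro hmem
      have hprev : (a, b + d) ∈ cellsD m :=
        cells_nw hm hmem hm1.1 le_rfl (by omega) (by omega)
      exact le_trans (ih hprev) (hT.2.1 a (b + d) hprev (by exact hmem))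
  have s1 : T (a, b) ≤ T (a, j) := by
    have := hrow (j - b)
    rw [show b + (j - b) = j from by omega] at this
    exact this haj
  have hcol : ∀ d, (a + d, j) ∈ cellsD m → T (a, j) ≤ T (a + d, j) := by
    intro d
    induction d with
    | zero => intro _; exact le_rfl
    | succ d ih =>
      intro hmem
      have hprev : (a + d, j) ∈ cellsD m :=
        cells_nw hm hmem (by omega) (by omega)
          (by have := (mem_cellsD hm).1 hmem; omega) le_rfl
      exact le_trans (ih hprev) (hT.2.2.1 (a + d) j hprev (by exact hmem))
  have s2 : T (a, j) ≤ T (i, j) := by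
    have := hcol (i - a)
    rw [show a + (i - a) = i from by omega] at this
    exact this h2
  exact le_trans s1 s2

lemma diag_strict (hm : IsStrictPartition m) (hT : Good l m T) {a b c : ℕ}
    (h1 : (a, a + c) ∈ cellsD m) (h2 : (b, b + c) ∈ cellsD m) (hab : a < b) :
    a + T (a, a + c) < b + T (b, b + c) := by
  have := T_nw hm hT h1 h2 (by omega) (by omega)
  omega

lemma diag_mono (hm : IsStrictPartition m) (hT : Good l m T) {a b c : ℕ}
    (h1 : (a, a + c) ∈ cellsD m) (h2 : (b, b + c) ∈ cellsD m) (hab : a ≤ b) :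
    a + T (a, a + c) ≤ b + T (b, b + c) := by
  rcases eq_or_lt_of_le hab with rfl | h
  · omega
  · exact le_of_lt (diag_strict hm hT h1 h2 h)

lemma fT_injOn (hm : IsStrictPartition m) (hT : Good l m T) :
    Set.InjOn (fun p : ℕ × ℕ => (p.1 + T p, p.2 + T p)) ↑(cellsD m) := by
  rintro ⟨a, b⟩ ha ⟨i, j⟩ hi heq
  simp only [Finset.mem_coe] at ha hi
  simp only [Prod.mk.injEq] at heq
  have hab := (mem_cellsD hm).1 ha
  have hij := (mem_cellsD hm).1 hi
  obtain ⟨c, rfl⟩ : ∃ c, b = a + c := ⟨b - a, by omega⟩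
  obtain ⟨c', rfl⟩ : ∃ c', j = i + c' := ⟨j - i, by omega⟩
  have hcc : c' = c := by omega
  subst hcc
  rcases lt_trichotomy a i with h | h | h
  · exfalso
    have := diag_strict hm hT ha hi h
    omega
  · simp [h]
  · exfalso
    have := diag_strict hm hT hi ha h
    omega

lemma Phi_subset (hl : IsStrictPartition l) (hm : IsStrictPartition m)
    (hT : Good l m T) : Phi m T ⊆ cellsD l := by
  intro q hq
  obtain ⟨⟨a, b⟩, hab, rfl⟩ := Finset.mem_image.1 hq
  have h1 := (mem_cellsD hm).1 hab
  have h2 := hT.2.2.2.2 a b hab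
  refine (mem_cellsD hl).2 ⟨by omega, by omega, ?_⟩
  show b + T (a, b) ≤ l (a + T (a, b)) + (a + T (a, b))
  omega

lemma image_update {α β : Type*} [DecidableEq α] [DecidableEq β] (s : Finset α)
    (f : α → β) (hinj : Set.InjOn f ↑s) {p : α} (hp : p ∈ s) (q : β) :
    s.image (Function.update f p q) = insert q ((s.image f).erase (f p)) := by
  ext x
  simp only [Finset.mem_image, Finset.mem_insert, Finset.mem_erase]
  constructor
  · rintro ⟨r, hr, rfl⟩
    by_cases h : r = p
    · subst h; left; simp
    · right
      rw [Function.update_of_ne h]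
      exact ⟨fun he => h (hinj hr hp he), r, hr, rfl⟩
  · rintro (rfl | ⟨hne, r, hr, rfl⟩)
    · exact ⟨p, hp, by simp⟩
    · have h : r ≠ p := fun he => hne (he ▸ rfl)
      exact ⟨r, hr, Function.update_of_ne h _ _⟩

end Aux2
section Aux3

variable {l m : ℕ → ℕ} {T : ℕ × ℕ → ℕ}

lemma prod_ne_of_not_and {x y a b : ℕ} (h : ¬(x = a ∧ y = b)) : (x, y) ≠ (a, b) := by
  intro he
  simp only [Prod.mk.injEq] at he
  exact h he

lemma good_update (hm : IsStrictPartition m) (hT : Good l m T) {a b v : ℕ}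
    (hab : (a, b) ∈ cellsD m)
    (hL : ∀ y, y + 1 = b → (a, y) ∈ cellsD m → T (a, y) ≤ v)
    (hR : (a, b + 1) ∈ cellsD m → v ≤ T (a, b + 1))
    (hU : ∀ x, x + 1 = a → (x, b) ∈ cellsD m → T (x, b) ≤ v)
    (hD : (a + 1, b) ∈ cellsD m → v ≤ T (a + 1, b))
    (hpar : b = a + 1 → Even v)
    (hflag : b ≤ l (a + v) + a) :
    Good l m (Function.update T (a, b) v) := by
  refine ⟨?_, ?_, ?_, ?_, ?_⟩
  · intro p hp
    rw [Function.update_of_ne (fun he => hp (by rw [he]; exact hab))]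
    exact hT.1 p hp
  · intro x y hx hy
    by_cases h1 : x = a ∧ y = b
    · obtain ⟨rfl, rfl⟩ := h1
      rw [Function.update_self, Function.update_of_ne (prod_ne_of_not_and (by omega))]
      exact hR hy
    · rw [Function.update_of_ne (prod_ne_of_not_and h1)]
      by_cases h2 : x = a ∧ y + 1 = b
      · obtain ⟨rfl, h2⟩ := h2
        rw [show ((x, y + 1) : ℕ × ℕ) = (x, b) from by rw [h2], Function.update_self]
        exact hL y h2 hx
      · rw [Function.update_of_ne (prod_ne_of_not_and (by omega))]
        exact hT.2.1 x y hx hy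
  · intro x y hx hy
    by_cases h1 : x = a ∧ y = b
    · obtain ⟨rfl, rfl⟩ := h1
      rw [Function.update_self, Function.update_of_ne (prod_ne_of_not_and (by omega))]
      exact hD hy
    · rw [Function.update_of_ne (prod_ne_of_not_and h1)]
      by_cases h2 : x + 1 = a ∧ y = b
      · obtain ⟨h2, rfl⟩ := h2
        rw [show ((x + 1, y) : ℕ × ℕ) = (a, y) from by rw [h2], Function.update_self]
        exact hU x h2 hx
      · rw [Function.update_of_ne (prod_ne_of_not_and (by omega))]
        exact hT.2.2.1 x y hx hy
  · intro x hx
    by_cases h1 : x = a ∧ x + 1 = b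
    · obtain ⟨rfl, h1⟩ := h1
      rw [show ((x, x + 1) : ℕ × ℕ) = (x, b) from by rw [h1], Function.update_self]
      exact hpar (by omega)
    · rw [Function.update_of_ne (prod_ne_of_not_and h1)]
      exact hT.2.2.2.1 x hx
  · intro x y hxy
    by_cases h1 : x = a ∧ y = b
    · obtain ⟨rfl, rfl⟩ := h1
      rw [Function.update_self]
      exact hflag
    · rw [Function.update_of_ne (prod_ne_of_not_and h1)]
      exact hT.2.2.2.2 x y hxy

lemma Phi_update (hm : IsStrictPartition m) (hT : Good l m T) {a b : ℕ} (v : ℕ)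
    (hab : (a, b) ∈ cellsD m) :
    Phi m (Function.update T (a, b) v) =
      insert (a + v, b + v) ((Phi m T).erase (a + T (a, b), b + T (a, b))) := by
  have hfun : (fun p : ℕ × ℕ => (p.1 + Function.update T (a, b) v p,
      p.2 + Function.update T (a, b) v p)) =
      Function.update (fun p : ℕ × ℕ => (p.1 + T p, p.2 + T p)) (a, b) (a + v, b + v) := by
    funext p
    by_cases h : p = (a, b)
    · subst h; simp
    · rw [Function.update_of_ne h, Function.update_of_ne h]
  show (cellsD m).image _ = _
  rw [hfun, image_update (cellsD m) _ (fT_injOn hm hT) hab (a + v, b + v)]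
  rfl

lemma good_zero (hl : IsStrictPartition l) (hm : IsStrictPartition m)
    (hsub : cellsD m ⊆ cellsD l) : Good l m (fun _ => 0) := by
  refine ⟨fun _ _ => rfl, fun _ _ _ _ => le_rfl, fun _ _ _ _ => le_rfl,
    fun _ _ => Even.zero, ?_⟩
  intro i j hij
  have := (mem_cellsD hl).1 (hsub hij)
  show j ≤ l (i + 0) + i
  rw [Nat.add_zero]
  omega

lemma Phi_zero : Phi m (fun _ => 0) = cellsD m := by
  show (cellsD m).image _ = _
  have : (fun p : ℕ × ℕ => (p.1 + 0, p.2 + 0)) = id := by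
    funext p; simp
  rw [this, Finset.image_id]

end Aux3
section Aux4

variable {l m : ℕ → ℕ} {T : ℕ × ℕ → ℕ}

lemma mem_Phi {a b : ℕ} (hab : (a, b) ∈ cellsD m) :
    (a + T (a, b), b + T (a, b)) ∈ Phi m T :=
  Finset.mem_image.2 ⟨(a, b), hab, rfl⟩

lemma mem_Phi' {a b r s : ℕ} (hab : (a, b) ∈ cellsD m) (h1 : a + T (a, b) = r)
    (h2 : b + T (a, b) = s) : (r, s) ∈ Phi m T :=
  Finset.mem_image.2 ⟨(a, b), hab, by rw [← h1, ← h2]⟩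

lemma surj_aux (hl : IsStrictPartition l) (hm : IsStrictPartition m)
    (hsub : cellsD m ⊆ cellsD l) :
    ∀ D, Relation.ReflTransGen (ExcitedMoveD l) (cellsD m) D →
      ∃ T, Good l m T ∧ Phi m T = D := by
  intro D h
  induction h with
  | refl => exact ⟨fun _ => 0, good_zero hl hm hsub, Phi_zero⟩
  | tail hab hbc ih =>
    obtain ⟨T, hT, rfl⟩ := ih
    rcases hbc with ⟨r, s, hrs, hmem, hc1, hn1, hc2, hn2, hc3, hn3, rfl⟩ |
      ⟨r, hmem, hc1, hn1, hc2, hn2, hc3, hn3, hc4, hn4, hc5, hn5, rfl⟩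
    · -- non-diagonal move at (r, s) → (r+1, s+1)
      obtain ⟨⟨a, b⟩, habm, heq⟩ := Finset.mem_image.1 hmem
      simp only [Prod.mk.injEq] at heq
      obtain ⟨h1, h2⟩ := heq
      have hcell := (mem_cellsD hm).1 habm
      have hba : a + 2 ≤ b := by omega
      refine ⟨Function.update T (a, b) (T (a, b) + 1), ?_, ?_⟩
      · refine good_update hm hT habm ?_ ?_ ?_ ?_ ?_ ?_
        · intro y hy hym
          have := hT.2.1 a y hym (by rw [hy]; exact habm)
          rw [hy] at this
          omega
        · intro hmem'
          have hge := hT.2.1 a b habm hmem'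
          rcases eq_or_lt_of_le hge with he | hlt
          · exact absurd (mem_Phi' hmem' (by omega) (by omega)) hn2
          · omega
        · intro x hx hxm
          have := hT.2.2.1 x b hxm (by rw [hx]; exact habm)
          rw [hx] at this
          omega
        · intro hmem'
          have hge := hT.2.2.1 a b habm hmem'
          rcases eq_or_lt_of_le hge with he | hlt
          · exact absurd (mem_Phi' hmem' (by omega) (by omega)) hn1
          · omega
        · intro hb1; omega
        · have := (mem_cellsD hl).1 hc3
          have hr : l (r + 1) = l (a + (T (a, b) + 1)) := by
            rw [show r + 1 = a + (T (a, b) + 1) from by omega]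
          omega
      · rw [Phi_update hm hT _ habm, h1, h2,
          show a + (T (a, b) + 1) = r + 1 from by omega,
          show b + (T (a, b) + 1) = s + 1 from by omega]
    · -- diagonal move at (r, r+1) → (r+2, r+3)
      obtain ⟨⟨a, b⟩, habm, heq⟩ := Finset.mem_image.1 hmem
      simp only [Prod.mk.injEq] at heq
      obtain ⟨h1, h2⟩ := heq
      have hcell := (mem_cellsD hm).1 habm
      have hba : b = a + 1 := by omega
      subst hba
      refine ⟨Function.update T (a, a + 1) (T (a, a + 1) + 2), ?_, ?_⟩
      · refine good_update hm hT habm ?_ ?_ ?_ ?_ ?_ ?_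
        · intro y hy hym
          have := (mem_cellsD hm).1 hym
          omega
        · intro hmem'
          have hge := hT.2.1 a (a + 1) habm hmem'
          rcases eq_or_lt_of_le hge with he | hlt
          · exact absurd (mem_Phi' hmem' (by omega) (by omega)) hn1
          · rcases eq_or_lt_of_le (Nat.succ_le_of_lt hlt) with he2 | hlt2
            · exact absurd (mem_Phi' hmem' (by omega) (by omega)) hn4
            · omega
        · intro x hx hxm
          have := hT.2.2.1 x (a + 1) hxm (by rw [hx]; exact habm)
          rw [hx] at this
          omega
        · intro hmem'
          have := (mem_cellsD hm).1 hmem'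
          omega
        · intro _
          have := hT.2.2.2.1 a habm
          exact (Even.add this (by norm_num))
        · have := (mem_cellsD hl).1 hc5
          have hr : l (r + 2) = l (a + (T (a, a + 1) + 2)) := by
            rw [show r + 2 = a + (T (a, a + 1) + 2) from by omega]
          omega
      · rw [Phi_update hm hT _ habm, h1, h2,
          show a + (T (a, a + 1) + 2) = r + 2 from by omega,
          show a + 1 + (T (a, a + 1) + 2) = r + 3 from by omega]

end Aux4
section Aux5

variable {l m : ℕ → ℕ} {T : ℕ × ℕ → ℕ}

lemma Phi_eq_cells (h0 : ∀ p ∈ cellsD m, T p = 0) : Phi m T = cellsD m := by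
  ext q
  simp only [Phi, Finset.mem_image]
  constructor
  · rintro ⟨p, hp, rfl⟩
    rw [h0 p hp]
    simpa using hp
  · intro hq
    exact ⟨q, hq, by rw [h0 q hq]; simp⟩

lemma mem_ED (hl : IsStrictPartition l) {D : Finset (ℕ × ℕ)} :
    D ∈ ED l m ↔ D ⊆ cellsD l ∧ Relation.ReflTransGen (ExcitedMoveD l) (cellsD m) D := by
  unfold ED
  rw [Finset.mem_filter, Finset.mem_powerset]

set_option maxHeartbeats 2000000 in
lemma maps_aux (hl : IsStrictPartition l) (hm : IsStrictPartition m)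
    (hsub : cellsD m ⊆ cellsD l) :
    ∀ n (T : ℕ × ℕ → ℕ), Good l m T → (∑ p ∈ cellsD m, T p) ≤ n →
      Phi m T ∈ ED l m := by
  intro n
  induction n with
  | zero =>
    intro T hT hsum
    have h0 : ∀ p ∈ cellsD m, T p = 0 := by
      intro p hp
      have := Finset.single_le_sum (f := T) (fun q _ => Nat.zero_le _) hp
      omega
    rw [Phi_eq_cells h0]
    exact (mem_ED hl).2 ⟨hsub, Relation.ReflTransGen.refl⟩
  | succ n ih =>
    intro T hT hsum
    by_cases hz : ∀ p ∈ cellsD m, T p = 0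
    · rw [Phi_eq_cells hz]
      exact (mem_ED hl).2 ⟨hsub, Relation.ReflTransGen.refl⟩
    · push_neg at hz
      -- select the minimal cell with a nonzero entry
      set R := (cellsD m).filter (fun p => T p ≠ 0) with hR
      have hRne : R.Nonempty := by
        obtain ⟨p, hp, hne⟩ := hz
        exact ⟨p, Finset.mem_filter.2 ⟨hp, hne⟩⟩
      obtain ⟨i, ⟨p₀, hp₀R, hp₀i⟩, hile⟩ :
          ∃ i, (∃ p ∈ R, p.1 = i) ∧ ∀ p ∈ R, i ≤ p.1 := by
        have hFne : (R.image Prod.fst).Nonempty := hRne.image Prod.fst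
        refine ⟨(R.image Prod.fst).min' hFne, ?_, ?_⟩
        · obtain ⟨p, hp, hpe⟩ := Finset.mem_image.1 (Finset.min'_mem _ hFne)
          exact ⟨p, hp, hpe⟩
        · intro p hp
          exact Finset.min'_le _ _ (Finset.mem_image_of_mem _ hp)
      obtain ⟨j, ⟨p₁, hp₁R, hp₁i, hp₁j⟩, hjle⟩ :
          ∃ j, (∃ p ∈ R, p.1 = i ∧ p.2 = j) ∧ ∀ p ∈ R, p.1 = i → j ≤ p.2 := by
        have hRine : (R.filter (fun p => p.1 = i)).Nonempty :=
          ⟨p₀, Finset.mem_filter.2 ⟨hp₀R, hp₀i⟩⟩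
        have hCne := hRine.image Prod.snd
        refine ⟨((R.filter (fun p => p.1 = i)).image Prod.snd).min' hCne, ?_, ?_⟩
        · obtain ⟨p, hp, hpe⟩ := Finset.mem_image.1 (Finset.min'_mem _ hCne)
          exact ⟨p, (Finset.mem_filter.1 hp).1, (Finset.mem_filter.1 hp).2, hpe⟩
        · intro p hp hpi
          exact Finset.min'_le _ _ (Finset.mem_image_of_mem _ (Finset.mem_filter.2 ⟨hp, hpi⟩))
      have hp₁ij : p₁ = (i, j) := Prod.ext hp₁i hp₁j
      have hp₁R' : (i, j) ∈ R := hp₁ij ▸ hp₁R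
      have hijm : (i, j) ∈ cellsD m := (Finset.mem_filter.1 hp₁R').1
      have htne : T (i, j) ≠ 0 := (Finset.mem_filter.1 hp₁R').2
      have hminrow : ∀ p : ℕ × ℕ, p.1 < i → T p = 0 := by
        intro p hp
        by_contra hne
        have hpm : p ∈ cellsD m := by
          by_contra hc
          exact hne (hT.1 p hc)
        have := hile p (Finset.mem_filter.2 ⟨hpm, hne⟩)
        omega
      have hmincol : ∀ y, y < j → T (i, y) = 0 := by
        intro y hy
        by_contra hne
        have hpm : (i, y) ∈ cellsD m := by
          by_contra hc
          exact hne (hT.1 _ hc)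
        have := hjle (i, y) (Finset.mem_filter.2 ⟨hpm, hne⟩) rfl
        omega
      have hcellm := (mem_cellsD hm).1 hijm
      have hflagT := hT.2.2.2.2 i j hijm
      have hsum1 : ∑ p ∈ cellsD m, T p = T (i, j) + ∑ p ∈ (cellsD m).erase (i, j), T p :=
        (Finset.add_sum_erase _ _ hijm).symm
      by_cases hdiag : j = i + 1
      · -- diagonal cell
        subst hdiag
        obtain ⟨t, hts, hev⟩ : ∃ t, T (i, i + 1) = t + 2 ∧ Even t := by
          have hev := hT.2.2.2.1 i hijm
          obtain ⟨k, hk⟩ := hev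
          refine ⟨T (i, i + 1) - 2, by omega, ?_⟩
          exact ⟨k - 1, by omega⟩
        rw [hts, ← Nat.add_assoc] at hflagT
        have hs2 : l (i + t + 2) + (i + t + 2) ≤ l (i + t + 1) + (i + t + 1) :=
          sp_mono hl (by omega) (by omega) (by omega)
        have hs1 : l (i + t + 1) + (i + t + 1) ≤ l (i + t) + (i + t) :=
          sp_mono hl (by omega) (by omega) (by omega)
        set T' := Function.update T (i, i + 1) t with hT'def
        have hT'good : Good l m T' := by
          refine good_update hm hT hijm ?_ ?_ ?_ ?_ ?_ ?_
          · intro y hy hym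
            have := (mem_cellsD hm).1 hym
            omega
          · intro hmem'
            have := hT.2.1 i (i + 1) hijm hmem'
            omega
          · intro x hx hxm
            rw [hminrow (x, i + 1) (by simp; omega)]
            omega
          · intro hmem'
            have := (mem_cellsD hm).1 hmem'
            omega
          · intro _
            exact hev
          · omega
        have hT'val : T' (i, i + 1) = t := Function.update_self _ _ _
        have hT'sum : ∑ p ∈ cellsD m, T' p ≤ n := by
          rw [hT'def, Finset.sum_update_of_mem hijm, ← Finset.erase_eq]
          omega
        have hprev := ih T' hT'good hT'sum
        have hge : ∀ x y, (x, y) ∈ cellsD m → i ≤ x → t + 2 ≤ T (x, y) := by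
          intro x y hxy hx
          have hc := (mem_cellsD hm).1 hxy
          have := T_nw hm hT hijm hxy hx (by omega)
          omega
        have hstep : ∀ ρ σ : ℕ, i ≤ ρ → ρ ≤ i + t + 2 → σ ≤ i + t + 3 →
            (ρ, σ) ≠ (i + t, i + t + 1) → (ρ, σ) ∉ Phi m T' := by
          intro ρ σ h1 h2 h3 hne hmem
          obtain ⟨⟨x, y⟩, hxy, heq⟩ := Finset.mem_image.1 hmem
          simp only [Prod.mk.injEq] at heq
          by_cases h0 : (x, y) = (i, i + 1)
          · obtain ⟨rfl, rfl⟩ : x = i ∧ y = i + 1 := by simpa using h0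
            rw [hT'val] at heq
            exact hne (by simp only [Prod.mk.injEq]; omega)
          · rw [hT'def, Function.update_of_ne h0] at heq
            have hcxy := (mem_cellsD hm).1 hxy
            rcases lt_trichotomy x i with hx | hxe | hx
            · rw [hminrow (x, y) hx] at heq
              omega
            · rw [hxe] at heq hxy
              have hyne : y ≠ i + 1 := fun h => h0 (by rw [hxe, h])
              have := hge i y hxy le_rfl
              omega
            · have := hge x y hxy (by omega)
              omega
        refine (mem_ED hl).2 ⟨Phi_subset hl hm hT, ?_⟩
        refine Relation.ReflTransGen.tail ((mem_ED hl).1 hprev).2 ?_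
        refine Or.inr ⟨i + t, ?_, ?_, ?_, ?_, ?_, ?_, ?_, ?_, ?_, ?_, ?_, ?_⟩
        · exact mem_Phi' hijm (by rw [hT'val]) (by rw [hT'val]; omega)
        · exact (mem_cellsD hl).2 ⟨by omega, by omega, by omega⟩
        · exact hstep _ _ (by omega) (by omega) (by omega) (by intro h; simp only [Prod.mk.injEq] at h; omega)
        · exact (mem_cellsD hl).2 ⟨by omega, by omega, by omega⟩
        · exact hstep _ _ (by omega) (by omega) (by omega) (by intro h; simp only [Prod.mk.injEq] at h; omega)
        · exact (mem_cellsD hl).2 ⟨by omega, by omega, by omega⟩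
        · exact hstep _ _ (by omega) (by omega) (by omega) (by intro h; simp only [Prod.mk.injEq] at h; omega)
        · exact (mem_cellsD hl).2 ⟨by omega, by omega, by omega⟩
        · exact hstep _ _ (by omega) (by omega) (by omega) (by intro h; simp only [Prod.mk.injEq] at h; omega)
        · exact (mem_cellsD hl).2 ⟨by omega, by omega, by omega⟩
        · exact hstep _ _ (by omega) (by omega) (by omega) (by intro h; simp only [Prod.mk.injEq] at h; omega)
        · have hTT' : T = Function.update T' (i, i + 1) (t + 2) := by
            funext p
            by_cases h : p = (i, i + 1)
            · rw [h, Function.update_self, hts]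
            · rw [Function.update_of_ne h, hT'def, Function.update_of_ne h]
          conv_lhs => rw [hTT']
          rw [Phi_update hm hT'good _ hijm, hT'val]
          have e1 : ((i + (t + 2) : ℕ), (i + 1 + (t + 2) : ℕ)) =
              ((i + t + 2 : ℕ), (i + t + 3 : ℕ)) := by
            rw [show (i + (t + 2) : ℕ) = i + t + 2 from by omega,
              show (i + 1 + (t + 2) : ℕ) = i + t + 3 from by omega]
          have e2 : ((i + t : ℕ), (i + 1 + t : ℕ)) = ((i + t : ℕ), (i + t + 1 : ℕ)) := by
            rw [show (i + 1 + t : ℕ) = i + t + 1 from by omega]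
          rw [e1, e2]
      · -- non-diagonal cell
        have hba : i + 2 ≤ j := by omega
        obtain ⟨t, hts⟩ : ∃ t, T (i, j) = t + 1 := ⟨T (i, j) - 1, by omega⟩
        rw [hts, ← Nat.add_assoc] at hflagT
        have hs1 : l (i + t + 1) + (i + t + 1) ≤ l (i + t) + (i + t) :=
          sp_mono hl (by omega) (by omega) (by omega)
        set T' := Function.update T (i, j) t with hT'def
        have hT'good : Good l m T' := by
          refine good_update hm hT hijm ?_ ?_ ?_ ?_ ?_ ?_
          · intro y hy hym
            rw [hmincol y (by omega)]
            omega
          · intro hmem'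
            have := hT.2.1 i j hijm hmem'
            omega
          · intro x hx hxm
            rw [hminrow (x, j) (by simp; omega)]
            omega
          · intro hmem'
            have := hT.2.2.1 i j hijm hmem'
            omega
          · intro h; omega
          · omega
        have hT'val : T' (i, j) = t := Function.update_self _ _ _
        have hT'sum : ∑ p ∈ cellsD m, T' p ≤ n := by
          rw [hT'def, Finset.sum_update_of_mem hijm, ← Finset.erase_eq]
          omega
        have hprev := ih T' hT'good hT'sum
        have hge : ∀ x y, (x, y) ∈ cellsD m → i ≤ x → j ≤ y → t + 1 ≤ T (x, y) := by
          intro x y hxy hx hy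
          have := T_nw hm hT hijm hxy hx hy
          omega
        have hstep : ∀ ρ σ : ℕ, i ≤ ρ → j ≤ σ → σ ≤ j + t + 1 → ρ ≤ i + t + 1 →
            ρ + j ≤ σ + i + 1 → (ρ, σ) ≠ (i + t, j + t) → (ρ, σ) ∉ Phi m T' := by
          intro ρ σ h1 h2 h3 h4 h5 hne hmem
          obtain ⟨⟨x, y⟩, hxy, heq⟩ := Finset.mem_image.1 hmem
          simp only [Prod.mk.injEq] at heq
          by_cases h0 : (x, y) = (i, j)
          · obtain ⟨rfl, rfl⟩ : x = i ∧ y = j := by simpa using h0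
            rw [hT'val] at heq
            exact hne (by simp only [Prod.mk.injEq]; omega)
          · rw [hT'def, Function.update_of_ne h0] at heq
            have hcxy := (mem_cellsD hm).1 hxy
            rcases lt_trichotomy x i with hx | hxe | hx
            · rw [hminrow (x, y) hx] at heq
              omega
            · rw [hxe] at heq hxy
              rcases lt_trichotomy y j with hy | hye | hy
              · rw [hmincol y hy] at heq
                omega
              · exact h0 (by rw [hxe, hye])
              · have := hge i y hxy le_rfl (by omega)
                omega
            · have hyj : j ≤ y := by omega
              have := hge x y hxy (by omega) hyj
              omega
        refine (mem_ED hl).2 ⟨Phi_subset hl hm hT, ?_⟩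
        refine Relation.ReflTransGen.tail ((mem_ED hl).1 hprev).2 ?_
        refine Or.inl ⟨i + t, j + t, by omega, ?_, ?_, ?_, ?_, ?_, ?_, ?_, ?_⟩
        · exact mem_Phi' hijm (by rw [hT'val]) (by rw [hT'val])
        · exact (mem_cellsD hl).2 ⟨by omega, by omega, by omega⟩
        · exact hstep _ _ (by omega) (by omega) (by omega) (by omega) (by omega)
            (by intro h; simp only [Prod.mk.injEq] at h; omega)
        · exact (mem_cellsD hl).2 ⟨by omega, by omega, by omega⟩
        · exact hstep _ _ (by omega) (by omega) (by omega) (by omega) (by omega)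
            (by intro h; simp only [Prod.mk.injEq] at h; omega)
        · exact (mem_cellsD hl).2 ⟨by omega, by omega, by omega⟩
        · exact hstep _ _ (by omega) (by omega) (by omega) (by omega) (by omega)
            (by intro h; simp only [Prod.mk.injEq] at h; omega)
        · have hTT' : T = Function.update T' (i, j) (t + 1) := by
            funext p
            by_cases h : p = (i, j)
            · rw [h, Function.update_self, hts]
            · rw [Function.update_of_ne h, hT'def, Function.update_of_ne h]
          conv_lhs => rw [hTT']
          rw [Phi_update hm hT'good _ hijm, hT'val]
          have e1 : ((i + (t + 1) : ℕ), (j + (t + 1) : ℕ)) =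
              ((i + t + 1 : ℕ), (j + t + 1 : ℕ)) := by
            rw [show (i + (t + 1) : ℕ) = i + t + 1 from by omega,
              show (j + (t + 1) : ℕ) = j + t + 1 from by omega]
          rw [e1]

end Aux5
section Aux6

variable {l m : ℕ → ℕ} {T T₁ T₂ : ℕ × ℕ → ℕ}

lemma inj_aux_le (hm : IsStrictPartition m) (hT1 : Good l m T₁) (hT2 : Good l m T₂)
    (hΦ : Phi m T₁ = Phi m T₂) {a : ℕ}
    (IH : ∀ q : ℕ × ℕ, q ∈ cellsD m → q.1 < a → T₁ q = T₂ q) {b : ℕ}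
    (hab : (a, b) ∈ cellsD m) : T₂ (a, b) ≤ T₁ (a, b) := by
  have hmem : (a + T₁ (a, b), b + T₁ (a, b)) ∈ Phi m T₂ := by
    rw [← hΦ]; exact mem_Phi hab
  obtain ⟨⟨x, y⟩, hxy, heq⟩ := Finset.mem_image.1 hmem
  simp only [Prod.mk.injEq] at heq
  have hc := (mem_cellsD hm).1 hxy
  have hcab := (mem_cellsD hm).1 hab
  obtain ⟨c, rfl⟩ : ∃ c, b = a + c := ⟨b - a, by omega⟩
  obtain ⟨c', rfl⟩ : ∃ c', y = x + c' := ⟨y - x, by omega⟩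
  have hcc : c = c' := by omega
  subst hcc
  rcases lt_trichotomy x a with hx | hx | hx
  · exfalso
    have hIH := IH (x, x + c) hxy hx
    have := diag_strict hm hT1 hxy hab hx
    omega
  · rw [hx] at heq
    omega
  · have := diag_mono hm hT2 hab hxy (by omega)
    omega

lemma inj_aux (hm : IsStrictPartition m) (hT1 : Good l m T₁) (hT2 : Good l m T₂)
    (hΦ : Phi m T₁ = Phi m T₂) :
    ∀ a (p : ℕ × ℕ), p ∈ cellsD m → p.1 = a → T₁ p = T₂ p := by
  intro a
  induction a using Nat.strong_induction_on with
  | _ a IH =>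
    rintro ⟨a', b⟩ hp he
    have he' : a' = a := he
    subst he'
    have IH' : ∀ q : ℕ × ℕ, q ∈ cellsD m → q.1 < a' → T₁ q = T₂ q := by
      intro q hq hlt
      exact IH q.1 hlt q hq rfl
    have h1 := inj_aux_le hm hT1 hT2 hΦ IH' hp
    have h2 := inj_aux_le hm hT2 hT1 hΦ.symm (fun q hq hlt => (IH' q hq hlt).symm) hp
    omega

end Aux6

/-- Excited diagrams of type D are in bijection with flagged increasing tableaux with
even diagonal entries: `T ↦ {(i + T(i,j), j + T(i,j)) : (i,j) ∈ [μ]^D}`. -/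
theorem statement17 (l m : ℕ → ℕ) (hl : IsStrictPartition l) (hm : IsStrictPartition m)
    (hsub : cellsD m ⊆ cellsD l) :
    Set.BijOn
      (fun T : ℕ × ℕ → ℕ => (cellsD m).image (fun p => (p.1 + T p, p.2 + T p)))
      {T : ℕ × ℕ → ℕ |
        (∀ p, p ∉ cellsD m → T p = 0) ∧
        (∀ i j : ℕ, (i, j) ∈ cellsD m → (i, j + 1) ∈ cellsD m → T (i, j) ≤ T (i, j + 1)) ∧
        (∀ i j : ℕ, (i, j) ∈ cellsD m → (i + 1, j) ∈ cellsD m → T (i, j) ≤ T (i + 1, j)) ∧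
        (∀ i : ℕ, (i, i + 1) ∈ cellsD m → Even (T (i, i + 1))) ∧
        (∀ i j : ℕ, (i, j) ∈ cellsD m → j ≤ l (i + T (i, j)) + i)}
      ↑(ED l m) := by
  refine ⟨?_, ?_, ?_⟩
  · intro T hT
    have hg : Good l m T := hT
    exact Finset.mem_coe.2 (maps_aux hl hm hsub (∑ p ∈ cellsD m, T p) T hg le_rfl)
  · intro T1 h1 T2 h2 heq
    have hg1 : Good l m T1 := h1
    have hg2 : Good l m T2 := h2
    have heq' : Phi m T1 = Phi m T2 := heq
    funext p
    by_cases hp : p ∈ cellsD m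
    · exact inj_aux hm hg1 hg2 heq' p.1 p hp rfl
    · rw [hg1.1 p hp, hg2.1 p hp]
  · intro D hD
    obtain ⟨T, hg, hΦ⟩ := surj_aux hl hm hsub D
      ((mem_ED hl).1 (Finset.mem_coe.1 hD)).2
    exact ⟨T, hg, hΦ⟩
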